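/- arXiv:2010.06806 — 2 statements merged into one kernel-verified Lean document; each statement's English description precedes it below -/
import Mathlib

section
/- There is a constant C_n > 0 depending only on n with the following property. Let r ∈ ℕ_{>0}^n, let L ⊂ ℝ^{2n} be the lattice generated by r_1 e_1, …, r_n e_n, e_{n+1}, …, e_{2n}, let à ∈ GL_{2n}(ℝ) and let d_n(Ã) denote the largest positive number d such that i·d is an eigenvalue of Ãᵀ J_n Ã. Define s_1 = min{ ‖Ã^{-1} v‖ : v ∈ L \ {0} } (shortest vector in the metric with orthonormal basis à e_i) and s_2 = 2√(π / d_n(Ã)). Then min(s_1, s_2)^{2n+2} ≤ C_n · (∏ r_i) · |det Ã|^{-1} · ‖Ãᵀ J_n Ã‖_HS^{-1}. -/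
open Matrix Polynomial Complex

/-- The standard `2n×2n` symplectic matrix `J_n = [[0, I],[-I, 0]]`. -/
def symplJ (n : ℕ) : Matrix (Fin n ⊕ Fin n) (Fin n ⊕ Fin n) ℝ :=
  Matrix.fromBlocks 0 1 (-1) 0

/-- The Euclidean norm on `ℝ^{2n}`. -/
noncomputable def euclNorm {n : ℕ} (v : Fin n ⊕ Fin n → ℝ) : ℝ :=
  Real.sqrt (∑ i, v i ^ 2)

section Aux

open MeasureTheory

variable {ι : Type*} [Fintype ι] [DecidableEq ι]

lemma charpoly_conj_diag (U D : Matrix ι ι ℂ) (h1 : U * star U = 1) (h2 : star U * U = 1) :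
    (U * D * star U).charpoly = D.charpoly := by
  have hUV : (C : ℂ →+* ℂ[X]).mapMatrix U * (C : ℂ →+* ℂ[X]).mapMatrix (star U) = 1 := by
    rw [← _root_.map_mul, h1, _root_.map_one]
  have hVU : (C : ℂ →+* ℂ[X]).mapMatrix (star U) * (C : ℂ →+* ℂ[X]).mapMatrix U = 1 := by
    rw [← _root_.map_mul, h2, _root_.map_one]
  have key : charmatrix (U * D * star U) =
      (C : ℂ →+* ℂ[X]).mapMatrix U * charmatrix D * (C : ℂ →+* ℂ[X]).mapMatrix (star U) := by
    unfold charmatrix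
    rw [Matrix.mul_sub, Matrix.sub_mul]
    congr 1
    · rw [Matrix.mul_assoc, (Matrix.scalar_commute (X : ℂ[X]) (Commute.all _) _).eq,
        ← Matrix.mul_assoc, hUV, Matrix.one_mul]
    · rw [_root_.map_mul, _root_.map_mul]
  unfold Matrix.charpoly
  rw [key, det_mul, det_mul, mul_comm, ← mul_assoc, ← det_mul, hVU, det_one, one_mul]

lemma charpoly_diagonal (v : ι → ℂ) :
    (Matrix.diagonal v).charpoly = ∏ j, (X - C (v j)) := by
  unfold Matrix.charpoly
  have : charmatrix (Matrix.diagonal v) = Matrix.diagonal fun j => (X : ℂ[X]) - C (v j) := by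
    ext i j
    rcases eq_or_ne i j with rfl | h
    · simp
    · simp [h, charmatrix_apply_ne _ _ _ h]
  rw [this, det_diagonal]

set_option maxHeartbeats 2000000 in
lemma skew_eig_bound (M : Matrix ι ι ℝ) (hskew : Mᵀ = -M) (d : ℝ) (hd : 0 < d)
    (h1 : (M.map Complex.ofReal).charpoly.IsRoot (Complex.I * (d : ℂ)))
    (hmax : ∀ d' : ℝ, 0 < d' →
      (M.map Complex.ofReal).charpoly.IsRoot (Complex.I * (d' : ℂ)) → d' ≤ d) :
    d ^ 2 ≤ (∑ i, ∑ j, M i j ^ 2) ∧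
      (∑ i, ∑ j, M i j ^ 2) ≤ (Fintype.card ι) * d ^ 2 := by
  set Mc : Matrix ι ι ℂ := M.map Complex.ofReal with hMc
  have hji : ∀ i j, M j i = - M i j := by
    intro i j
    have := congrFun (congrFun hskew i) j
    simpa [Matrix.transpose_apply, Matrix.neg_apply] using this
  have hN : (Complex.I • Mc).IsHermitian := by
    ext i j
    simp [Matrix.conjTranspose_apply, Mc, Matrix.map_apply, hji i j]
  set lam := hN.eigenvalues with hlam
  set U : Matrix ι ι ℂ := (hN.eigenvectorUnitary : Matrix ι ι ℂ) with hU
  have hU1 : U * star U = 1 := Matrix.mem_unitaryGroup_iff.mp (hN.eigenvectorUnitary).2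
  have hU2 : star U * U = 1 := Matrix.mem_unitaryGroup_iff'.mp (hN.eigenvectorUnitary).2
  set D : Matrix ι ι ℂ := Matrix.diagonal (fun j => -Complex.I * (lam j : ℂ)) with hD
  have hST : Complex.I • Mc = U * Matrix.diagonal ((↑) ∘ lam) * star U := hN.spectral_theorem
  have hdiag : (-Complex.I) • Matrix.diagonal ((↑) ∘ lam) = D := by
    ext i j
    rcases eq_or_ne i j with rfl | h
    · simp [hD]
    · simp [hD, Matrix.diagonal_apply_ne _ h]
  have hMcST : Mc = U * D * star U := by
    have h0 : Mc = (-Complex.I) • (Complex.I • Mc) := by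
      rw [smul_smul]
      simp
    rw [h0, hST, ← Matrix.smul_mul, ← Matrix.mul_smul, hdiag]
  have hcp : Mc.charpoly = ∏ j, (X - C (-Complex.I * (lam j : ℂ))) := by
    rw [hMcST, charpoly_conj_diag _ _ hU1 hU2, hD, _root_.charpoly_diagonal]
  have hrootiff : ∀ z : ℂ, Mc.charpoly.IsRoot z ↔ ∃ j, z = -Complex.I * (lam j : ℂ) := by
    intro z
    rw [hcp, Polynomial.IsRoot, Polynomial.eval_prod, Finset.prod_eq_zero_iff]
    constructor
    · rintro ⟨j, -, hj⟩
      rw [Polynomial.eval_sub, Polynomial.eval_X, Polynomial.eval_C, sub_eq_zero] at hj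
      exact ⟨j, hj⟩
    · rintro ⟨j, hj⟩
      exact ⟨j, Finset.mem_univ _, by
        rw [Polynomial.eval_sub, Polynomial.eval_X, Polynomial.eval_C, sub_eq_zero]; exact hj⟩
  have hconj : ∀ z : ℂ, Mc.charpoly.IsRoot z → Mc.charpoly.IsRoot (starRingEnd ℂ z) := by
    intro z hz
    have hmap : Mc.charpoly = M.charpoly.map Complex.ofRealHom := by
      rw [show Mc = M.map ⇑Complex.ofRealHom from rfl]
      exact Matrix.charpoly_map M Complex.ofRealHom
    rw [hmap] at hz ⊢
    rw [Polynomial.IsRoot, Polynomial.eval_map] at hz ⊢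
    have h3 := Polynomial.hom_eval₂ M.charpoly Complex.ofRealHom (starRingEnd ℂ) z
    rw [hz, map_zero] at h3
    have hcomp : (starRingEnd ℂ).comp Complex.ofRealHom = Complex.ofRealHom := by
      ext r; simp
    rw [hcomp] at h3
    exact h3.symm
  have hrootlam : ∀ j, Mc.charpoly.IsRoot (-Complex.I * (lam j : ℂ)) := fun j =>
    (hrootiff _).mpr ⟨j, rfl⟩
  have hbound : ∀ j, lam j ^ 2 ≤ d ^ 2 := by
    intro j
    rcases lt_trichotomy (lam j) 0 with h | h | h
    · have heq : Complex.I * ((-lam j : ℝ) : ℂ) = -Complex.I * (lam j : ℂ) := by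
        push_cast; ring
      have hle : -lam j ≤ d := hmax _ (by linarith) (by rw [heq]; exact hrootlam j)
      exact sq_le_sq' (by linarith) (by linarith)
    · rw [h]
      nlinarith [sq_nonneg d]
    · have hr : Mc.charpoly.IsRoot (starRingEnd ℂ (-Complex.I * (lam j : ℂ))) :=
        hconj _ (hrootlam j)
      have heq : starRingEnd ℂ (-Complex.I * (lam j : ℂ)) = Complex.I * ((lam j : ℝ) : ℂ) := by
        simp [_root_.map_mul, Complex.conj_I, Complex.conj_ofReal]
      rw [heq] at hr
      exact sq_le_sq' (by linarith) (hmax _ h hr)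
  have hMcH : Mcᴴ = -Mc := by
    ext i j
    simp [Matrix.conjTranspose_apply, Mc, Matrix.map_apply, hji j i]
  have hsq : Mc * Mc = U * (D * D) * star U := by
    rw [hMcST]
    have h4 : (U * D * star U) * (U * D * star U) = U * D * ((star U * U) * (D * star U)) := by
      simp only [Matrix.mul_assoc]
    rw [h4, hU2, Matrix.one_mul]
    simp only [Matrix.mul_assoc]
  have rhs : Matrix.trace (Mcᴴ * Mc) = ∑ j, ((lam j : ℂ)) ^ 2 := by
    rw [hMcH, Matrix.neg_mul, Matrix.trace_neg, hsq]
    rw [Matrix.trace_mul_comm, ← Matrix.mul_assoc, hU2, Matrix.one_mul]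
    rw [hD, Matrix.diagonal_mul_diagonal, Matrix.trace_diagonal, ← Finset.sum_neg_distrib]
    refine Finset.sum_congr rfl fun j _ => ?_
    have hI2 : (Complex.I) ^ 2 = -1 := Complex.I_sq
    ring_nf
    rw [hI2]
    ring
  have lhs : Matrix.trace (Mcᴴ * Mc) = ((∑ i, ∑ j, M i j ^ 2 : ℝ) : ℂ) := by
    rw [Matrix.trace]
    push_cast
    rw [Finset.sum_comm]
    refine Finset.sum_congr rfl fun i _ => ?_
    simp only [Matrix.diag_apply, Matrix.mul_apply, Matrix.conjTranspose_apply]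
    refine Finset.sum_congr rfl fun k _ => ?_
    simp [Mc, Matrix.map_apply, Complex.conj_ofReal]
    ring
  have hreal : (∑ i, ∑ j, M i j ^ 2) = ∑ j, lam j ^ 2 := by
    have h5 : ((∑ i, ∑ j, M i j ^ 2 : ℝ) : ℂ) = ((∑ j, lam j ^ 2 : ℝ) : ℂ) := by
      rw [← lhs, rhs]; push_cast; ring
    exact_mod_cast h5
  obtain ⟨j₀, hj₀⟩ := (hrootiff _).mp h1
  have hlamj₀ : lam j₀ = -d := by
    have h6 : Complex.I * (d : ℂ) = Complex.I * (-(lam j₀ : ℂ)) := by rw [hj₀]; ring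
    have h7 := mul_left_cancel₀ Complex.I_ne_zero h6
    have h8 : ((lam j₀ : ℝ) : ℂ) = ((-d : ℝ) : ℂ) := by push_cast; rw [h7, neg_neg]
    exact_mod_cast h8
  constructor
  · rw [hreal]
    calc d ^ 2 = lam j₀ ^ 2 := by rw [hlamj₀]; ring
    _ ≤ ∑ j, lam j ^ 2 :=
        Finset.single_le_sum (f := fun j => lam j ^ 2) (fun j _ => sq_nonneg _)
          (Finset.mem_univ j₀)
  · rw [hreal]
    calc ∑ j, lam j ^ 2 ≤ ∑ _j : ι, d ^ 2 := Finset.sum_le_sum fun j _ => hbound j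
    _ = (Fintype.card ι) * d ^ 2 := by rw [Finset.sum_const, nsmul_eq_mul, Finset.card_univ]

lemma minkowski_aux [Nonempty ι] :
    ∃ C : ℝ, 0 < C ∧ ∀ B : Matrix ι ι ℝ, IsUnit B.det →
      ∃ c : ι → ℤ, c ≠ 0 ∧
        (Real.sqrt (∑ i, (B.mulVec (fun j => (c j : ℝ)) i) ^ 2)) ^ (Fintype.card ι)
          ≤ C * |B.det| := by
  classical
  set m := Fintype.card ι with hm
  set κ : ENNReal := volume (Metric.closedBall (0 : EuclideanSpace ℝ ι) 1) with hκ
  have hκ0 : κ ≠ 0 := (Metric.measure_closedBall_pos volume _ one_pos).ne'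
  have hκt : κ ≠ ⊤ := measure_closedBall_lt_top.ne
  have hκ'pos : 0 < κ.toReal := ENNReal.toReal_pos hκ0 hκt
  refine ⟨2 * 2 ^ m / κ.toReal, by positivity, ?_⟩
  intro B hB
  have hV : 0 < |B.det| := abs_pos.mpr hB.ne_zero
  set C : ℝ := 2 * 2 ^ m / κ.toReal with hC
  have hCpos : 0 < C := by positivity
  set V : ℝ := |B.det| with hVdef
  set ρ : ℝ := (C * V) ^ ((m : ℝ)⁻¹) with hρ
  have hρpos : 0 < ρ := Real.rpow_pos_of_pos (by positivity) _
  have hmne : (m : ℝ) ≠ 0 := Nat.cast_ne_zero.mpr Fintype.card_ne_zero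
  have hρpow : ρ ^ m = C * V := by
    rw [hρ, ← Real.rpow_natCast ((C * V) ^ ((m : ℝ)⁻¹)) m, ← Real.rpow_mul (by positivity),
      inv_mul_cancel₀ hmne, Real.rpow_one]
  have hBinv : Invertible B := B.invertibleOfIsUnitDet hB
  set e : (ι → ℝ) ≃ₗ[ℝ] (ι → ℝ) := B.toLinearEquiv' hBinv with he
  set b : Module.Basis ι ℝ (ι → ℝ) := (Pi.basisFun ℝ ι).map e with hb
  have hbi : ∀ i, b i = B.mulVec (Pi.single i 1) := by
    intro i
    rw [hb, Module.Basis.map_apply, Pi.basisFun_apply]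
    show Matrix.toLin' B _ = _
    rw [Matrix.toLin'_apply]
  have hvolF : volume (ZSpan.fundamentalDomain b) = ENNReal.ofReal V := by
    rw [ZSpan.volume_fundamentalDomain]
    congr 1
    have : (Matrix.of ⇑b) = Bᵀ := by
      ext i j
      show b i j = Bᵀ i j
      rw [hbi i, Matrix.mulVec_single]
      simp [Matrix.transpose_apply]
    rw [this, Matrix.det_transpose]
  set s : Set (ι → ℝ) := {v | ∑ i, v i ^ 2 ≤ ρ ^ 2} with hs
  have h_symm : ∀ x ∈ s, -x ∈ s := by
    intro x hx
    simpa [hs] using hx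
  set φ : (ι → ℝ) ≃ₗ[ℝ] EuclideanSpace ℝ ι := (WithLp.linearEquiv 2 ℝ (ι → ℝ)).symm with hφ
  have hmem : ∀ v : ι → ℝ, v ∈ s ↔ φ v ∈ Metric.closedBall (0 : EuclideanSpace ℝ ι) ρ := by
    intro v
    rw [Metric.mem_closedBall, dist_zero_right, EuclideanSpace.norm_eq]
    have h1 : ∑ i, ‖(φ v) i‖ ^ 2 = ∑ i, v i ^ 2 := by
      refine Finset.sum_congr rfl fun i _ => ?_
      rw [Real.norm_eq_abs, _root_.sq_abs]
      rfl
    rw [h1]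
    constructor
    · intro hv
      calc Real.sqrt (∑ i, v i ^ 2) ≤ Real.sqrt (ρ ^ 2) := Real.sqrt_le_sqrt hv
      _ = ρ := Real.sqrt_sq hρpos.le
    · intro hv
      have hnn : (0:ℝ) ≤ ∑ i, v i ^ 2 := Finset.sum_nonneg fun i _ => sq_nonneg (v i)
      have h2 : (Real.sqrt (∑ i, v i ^ 2)) ^ 2 ≤ ρ ^ 2 :=
        pow_le_pow_left₀ (Real.sqrt_nonneg _) hv 2
      rwa [Real.sq_sqrt hnn] at h2
  have h_conv : Convex ℝ s := by
    have : s = φ.toLinearMap ⁻¹' (Metric.closedBall 0 ρ) := Set.ext fun v => hmem v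
    rw [this]
    exact (convex_closedBall _ _).linear_preimage _
  have hvols : volume s = ENNReal.ofReal (ρ ^ m) * κ := by
    have hpres := EuclideanSpace.volume_preserving_symm_measurableEquiv_toLp ι
    have hmeas : MeasurableSet s := by
      apply measurableSet_le
      · exact Finset.measurable_sum _ fun i _ => ((measurable_pi_apply i).pow_const 2)
      · exact measurable_const
    have hpre : (MeasurableEquiv.toLp 2 (ι → ℝ)).symm ⁻¹' s
        = Metric.closedBall (0 : EuclideanSpace ℝ ι) ρ := by
      ext x
      show WithLp.ofLp x ∈ s ↔ _
      exact hmem x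
    have := hpres.measure_preimage (hmeas.nullMeasurableSet)
    rw [hpre] at this
    rw [← this, Measure.addHaar_closedBall' _ _ hρpos.le, finrank_euclideanSpace]
  have hL : Countable (Submodule.span ℤ (Set.range ⇑b)).toAddSubgroup :=
    inferInstanceAs (Countable (Submodule.span ℤ (Set.range ⇑b)))
  have hlt : volume (ZSpan.fundamentalDomain b) * 2 ^ (Module.finrank ℝ (ι → ℝ)) < volume s := by
    rw [hvolF, hvols, Module.finrank_pi, ← hm, hρpow]
    have hκeq : κ = ENNReal.ofReal κ.toReal := (ENNReal.ofReal_toReal hκt).symm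
    rw [hκeq, ← ENNReal.ofReal_mul (by positivity)]
    have h2 : (2 : ENNReal) ^ m = ENNReal.ofReal (2 ^ m) := by
      rw [ENNReal.ofReal_pow (by norm_num)]
      norm_num
    rw [h2, ← ENNReal.ofReal_mul hV.le]
    rw [ENNReal.ofReal_lt_ofReal_iff (by positivity)]
    have hCκ : C * V * κ.toReal = 2 * 2 ^ m * V := by
      rw [hC]; field_simp
    rw [hCκ]
    have hp : (0:ℝ) < 2 ^ m := by positivity
    nlinarith
  obtain ⟨x, hx0, hxs⟩ :=
    exists_ne_zero_mem_lattice_of_measure_mul_two_pow_lt_measure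
      (ZSpan.isAddFundamentalDomain' b volume) h_symm h_conv hlt
  have hxmem : (x : ι → ℝ) ∈ Submodule.span ℤ (Set.range ⇑b) := x.2
  obtain ⟨c, hc⟩ := (Submodule.mem_span_range_iff_exists_fun ℤ).mp hxmem
  have hxval : (x : ι → ℝ) = B.mulVec (fun i => (c i : ℝ)) := by
    rw [← hc]
    calc ∑ i, c i • b i
        = ∑ i, B.mulVecLin ((c i : ℝ) • (Pi.single i (1:ℝ) : ι → ℝ)) := by
          refine Finset.sum_congr rfl fun i _ => ?_
          rw [LinearMap.map_smul, Matrix.mulVecLin_apply, ← hbi i, Int.cast_smul_eq_zsmul]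
    _ = B.mulVecLin (∑ i, (c i : ℝ) • (Pi.single i (1:ℝ) : ι → ℝ)) := (map_sum _ _ _).symm
    _ = B.mulVec (fun i => (c i : ℝ)) := by
          rw [Matrix.mulVecLin_apply]
          have h9 : (∑ i, (c i : ℝ) • (Pi.single i (1:ℝ) : ι → ℝ)) = fun i => (c i : ℝ) := by
            ext j
            rw [Finset.sum_apply]
            simp [Pi.single_apply]
          rw [h9]
  have hcne : c ≠ 0 := by
    intro h0
    apply hx0
    have hz : (x : ι → ℝ) = 0 := by
      rw [hxval, h0]
      have h9 : (fun i => (((0 : ι → ℤ)) i : ℝ)) = (0 : ι → ℝ) := by ext i; simp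
      rw [h9, Matrix.mulVec_zero]
    exact Subtype.ext hz
  refine ⟨c, hcne, ?_⟩
  have hxs' : ∑ i, (B.mulVec (fun j => (c j : ℝ)) i) ^ 2 ≤ ρ ^ 2 := by
    rw [← hxval]
    exact hxs
  have hsqrt : Real.sqrt (∑ i, (B.mulVec (fun j => (c j : ℝ)) i) ^ 2) ≤ ρ := by
    calc Real.sqrt _ ≤ Real.sqrt (ρ ^ 2) := Real.sqrt_le_sqrt hxs'
    _ = ρ := Real.sqrt_sq hρpos.le
  calc (Real.sqrt (∑ i, (B.mulVec (fun j => (c j : ℝ)) i) ^ 2)) ^ m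
      ≤ ρ ^ m := pow_le_pow_left₀ (Real.sqrt_nonneg _) hsqrt m
  _ = C * V := hρpow

end Aux

/-- Systolic inequality for compact sub-Riemannian Heisenberg manifolds, reduced to
linear algebra.  There is `C_n > 0` such that for every `r ∈ ℕ_{>0}ⁿ`, every invertible
`Ã ∈ GL_{2n}(ℝ)`, and `d` the largest positive real with `i·d` an eigenvalue of
`Ãᵀ J_n Ã`, writing `s₁` for the shortest nonzero vector of the lattice generated by
`r₁e₁,…,rₙeₙ,e_{n+1},…,e_{2n}` in the metric with orthonormal basis `Ãeᵢ`, and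
`s₂ = 2√(π/d)`, one has
`min(s₁,s₂)^(2n+2) ≤ C_n · (∏ rᵢ) · |det Ã|⁻¹ · ‖Ãᵀ J_n Ã‖_HS⁻¹`. -/
theorem stmt_12 (n : ℕ) (hn : 0 < n) :
    ∃ C : ℝ, 0 < C ∧
      ∀ (r : Fin n → ℕ), (∀ i, 0 < r i) →
      ∀ (A : Matrix (Fin n ⊕ Fin n) (Fin n ⊕ Fin n) ℝ), IsUnit A.det →
      ∀ d : ℝ, 0 < d →
      ((Aᵀ * symplJ n * A).map (Complex.ofReal)).charpoly.IsRoot (Complex.I * (d : ℂ)) →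
      (∀ d' : ℝ, 0 < d' →
        ((Aᵀ * symplJ n * A).map (Complex.ofReal)).charpoly.IsRoot (Complex.I * (d' : ℂ)) →
        d' ≤ d) →
      min
        (sInf {x : ℝ | ∃ c : Fin n ⊕ Fin n → ℤ, c ≠ 0 ∧
          x = euclNorm (A⁻¹.mulVec (fun i =>
            (c i : ℝ) * Sum.elim (fun j : Fin n => (r j : ℝ)) (fun _ => (1 : ℝ)) i))})
        (2 * Real.sqrt (Real.pi / d)) ^ (2 * n + 2)
      ≤ C * (∏ i, (r i : ℝ)) * |A.det|⁻¹ *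
          (Real.sqrt (∑ i, ∑ j, ((Aᵀ * symplJ n * A) i j) ^ 2))⁻¹ := by
  classical
  have hne : Nonempty (Fin n ⊕ Fin n) := ⟨Sum.inr ⟨0, hn⟩⟩
  obtain ⟨C₁, hC₁pos, hmink⟩ := minkowski_aux (ι := Fin n ⊕ Fin n)
  have hpi : (0:ℝ) < Real.pi := Real.pi_pos
  refine ⟨C₁ * (4 * Real.pi * Real.sqrt (2 * (n:ℝ))), by positivity, ?_⟩
  intro r hr A hA d hd hroot hmax
  set M := Aᵀ * symplJ n * A with hM
  have hcard : (Fintype.card (Fin n ⊕ Fin n)) = 2 * n := by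
    simp [Fintype.card_sum, two_mul]
  have hskew : Mᵀ = -M := by
    have hJ : (symplJ n)ᵀ = -(symplJ n) := by
      simp [symplJ, Matrix.fromBlocks_transpose, Matrix.fromBlocks_neg]
    rw [hM, Matrix.transpose_mul, Matrix.transpose_mul, Matrix.transpose_transpose, hJ]
    simp [Matrix.mul_assoc]
  obtain ⟨hd2le, hle2nd2⟩ := skew_eig_bound M hskew d hd hroot hmax
  set SS := ∑ i, ∑ j, M i j ^ 2 with hSS
  have hSSpos : 0 < SS := lt_of_lt_of_le (pow_pos hd 2) hd2le
  have hsqrtSSpos : 0 < Real.sqrt SS := Real.sqrt_pos.mpr hSSpos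
  have hsqrtle : Real.sqrt SS ≤ Real.sqrt (2 * (n:ℝ)) * d := by
    calc Real.sqrt SS ≤ Real.sqrt ((2 * (n:ℝ)) * d ^ 2) := by
          apply Real.sqrt_le_sqrt
          calc SS ≤ (Fintype.card (Fin n ⊕ Fin n)) * d ^ 2 := hle2nd2
          _ = (2 * (n:ℝ)) * d ^ 2 := by rw [hcard]; push_cast; ring
    _ = Real.sqrt (2 * (n:ℝ)) * d := by
          rw [Real.sqrt_mul (by positivity), Real.sqrt_sq hd.le]
  have hinvd : 1 / d ≤ Real.sqrt (2 * (n:ℝ)) * (Real.sqrt SS)⁻¹ := by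
    rw [← div_eq_mul_inv, div_le_div_iff₀ hd hsqrtSSpos, one_mul]
    exact hsqrtle
  set rv : (Fin n ⊕ Fin n) → ℝ :=
    Sum.elim (fun j : Fin n => (r j : ℝ)) (fun _ => (1:ℝ)) with hrv
  set S : Set ℝ := {x : ℝ | ∃ c : Fin n ⊕ Fin n → ℤ, c ≠ 0 ∧
      x = euclNorm (A⁻¹.mulVec (fun i => (c i : ℝ) * rv i))} with hS
  set s1 := sInf S with hs1
  set s2 := 2 * Real.sqrt (Real.pi / d) with hs2
  have hdetAne : A.det ≠ 0 := hA.ne_zero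
  set B := A⁻¹ * Matrix.diagonal rv with hB
  have hprodpos : 0 < ∏ i, (r i : ℝ) :=
    Finset.prod_pos fun i _ => by exact_mod_cast hr i
  have hdetB : B.det = (A.det)⁻¹ * ∏ i, (r i : ℝ) := by
    rw [hB, Matrix.det_mul, Matrix.det_nonsing_inv, Matrix.det_diagonal, Ring.inverse_eq_inv']
    congr 1
    rw [Fintype.prod_sum_type]
    simp [hrv]
  have hBunit : IsUnit B.det := by
    rw [hdetB]
    exact isUnit_iff_ne_zero.mpr (mul_ne_zero (inv_ne_zero hdetAne) hprodpos.ne')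
  obtain ⟨c, hc0, hcle⟩ := hmink B hBunit
  have hvec : B.mulVec (fun j => (c j : ℝ)) = A⁻¹.mulVec (fun i => (c i : ℝ) * rv i) := by
    rw [hB, ← Matrix.mulVec_mulVec]
    have h9 : Matrix.diagonal rv *ᵥ (fun j => (c j : ℝ)) = fun i => (c i : ℝ) * rv i := by
      funext i
      rw [Matrix.mulVec_diagonal]
      ring
    rw [h9]
  set val := Real.sqrt (∑ i, (B.mulVec (fun j => (c j : ℝ)) i) ^ 2) with hval
  have hvalmem : val ∈ S := by
    rw [hS]
    refine ⟨c, hc0, ?_⟩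
    rw [hval, hvec]
    rfl
  have hBdd : BddBelow S := by
    refine ⟨0, fun y hy => ?_⟩
    rw [hS] at hy
    obtain ⟨c', -, rfl⟩ := hy
    exact Real.sqrt_nonneg _
  have hs1le : s1 ≤ val := csInf_le hBdd hvalmem
  have hs1nonneg : 0 ≤ s1 := by
    apply Real.sInf_nonneg
    intro y hy
    rw [hS] at hy
    obtain ⟨c', -, rfl⟩ := hy
    exact Real.sqrt_nonneg _
  have hs2nonneg : 0 ≤ s2 := by rw [hs2]; positivity
  have hm0 : 0 ≤ min s1 s2 := le_min hs1nonneg hs2nonneg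
  have hs2sq : s2 ^ 2 = 4 * (Real.pi / d) := by
    rw [hs2, mul_pow, Real.sq_sqrt (by positivity)]
    ring
  have hval2 : s1 ^ (2 * n) ≤ C₁ * |B.det| := by
    calc s1 ^ (2 * n) ≤ val ^ (2 * n) := pow_le_pow_left₀ hs1nonneg hs1le _
    _ = val ^ (Fintype.card (Fin n ⊕ Fin n)) := by rw [hcard]
    _ ≤ C₁ * |B.det| := hcle
  have habsdetB : |B.det| = (∏ i, (r i : ℝ)) * |A.det|⁻¹ := by
    rw [hdetB, abs_mul, abs_inv, abs_of_pos hprodpos]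
    ring
  have hs2b : s2 ^ 2 ≤ 4 * Real.pi * (Real.sqrt (2 * (n:ℝ)) * (Real.sqrt SS)⁻¹) := by
    rw [hs2sq]
    calc 4 * (Real.pi / d) = (4 * Real.pi) * (1 / d) := by ring
    _ ≤ (4 * Real.pi) * (Real.sqrt (2 * (n:ℝ)) * (Real.sqrt SS)⁻¹) :=
        mul_le_mul_of_nonneg_left hinvd (by positivity)
    _ = 4 * Real.pi * (Real.sqrt (2 * (n:ℝ)) * (Real.sqrt SS)⁻¹) := by ring
  calc min s1 s2 ^ (2 * n + 2) = (min s1 s2) ^ (2 * n) * (min s1 s2) ^ 2 := by rw [pow_add]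
  _ ≤ s1 ^ (2 * n) * s2 ^ 2 :=
      mul_le_mul (pow_le_pow_left₀ hm0 (min_le_left _ _) _)
        (pow_le_pow_left₀ hm0 (min_le_right _ _) 2) (pow_nonneg hm0 2) (pow_nonneg hs1nonneg _)
  _ ≤ (C₁ * |B.det|) * (4 * Real.pi * (Real.sqrt (2 * (n:ℝ)) * (Real.sqrt SS)⁻¹)) :=
      mul_le_mul hval2 hs2b (sq_nonneg _) (mul_nonneg hC₁pos.le (abs_nonneg _))
  _ = C₁ * (4 * Real.pi * Real.sqrt (2 * (n:ℝ))) * (∏ i, (r i : ℝ)) * |A.det|⁻¹ *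
        (Real.sqrt SS)⁻¹ := by
      rw [habsdetB]; ring
end

section
/- The set of lattices in H_n: for r = (r_1, …, r_n) with r_i | r_{i+1}, the subgroup Γ_r generated by exp(r_1 X_1), …, exp(r_n X_n), exp(X_{n+1}), …, exp(X_{2n}), exp(Z) is a lattice (discrete cocompact subgroup) of H_n, and the image P_0(Γ_r) ⊂ ℝ^{2n} under the horizontal projection is the lattice generated by r_1 e_1, …, r_n e_n, e_{n+1}, …, e_{2n}. -/
open scoped BigOperators

/-- The `(2n+1)`-dimensional Heisenberg group `H_n` in exponential coordinates
`(x, y, z)` with `x, y ∈ ℝⁿ`, `z ∈ ℝ`; brackets `[X_i, X_{i+n}] = Z`. -/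
@[ext]
structure Heis (n : ℕ) where
  x : Fin n → ℝ
  y : Fin n → ℝ
  z : ℝ

/-- The symplectic pairing entering the Heisenberg group law. -/
def heisS {n : ℕ} (x y x' y' : Fin n → ℝ) : ℝ := ∑ i, (x i * y' i - y i * x' i)

noncomputable instance {n : ℕ} : Mul (Heis n) :=
  ⟨fun p q => ⟨p.x + q.x, p.y + q.y, p.z + q.z + heisS p.x p.y q.x q.y / 2⟩⟩

instance {n : ℕ} : One (Heis n) := ⟨⟨0, 0, 0⟩⟩

noncomputable instance {n : ℕ} : Inv (Heis n) := ⟨fun p => ⟨-p.x, -p.y, -p.z⟩⟩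

@[simp] lemma Heis.mul_x {n : ℕ} (p q : Heis n) : (p * q).x = p.x + q.x := rfl
@[simp] lemma Heis.mul_y {n : ℕ} (p q : Heis n) : (p * q).y = p.y + q.y := rfl
@[simp] lemma Heis.mul_z {n : ℕ} (p q : Heis n) :
    (p * q).z = p.z + q.z + heisS p.x p.y q.x q.y / 2 := rfl
@[simp] lemma Heis.one_x {n : ℕ} : (1 : Heis n).x = 0 := rfl
@[simp] lemma Heis.one_y {n : ℕ} : (1 : Heis n).y = 0 := rfl
@[simp] lemma Heis.one_z {n : ℕ} : (1 : Heis n).z = 0 := rfl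
@[simp] lemma Heis.inv_x {n : ℕ} (p : Heis n) : p⁻¹.x = -p.x := rfl
@[simp] lemma Heis.inv_y {n : ℕ} (p : Heis n) : p⁻¹.y = -p.y := rfl
@[simp] lemma Heis.inv_z {n : ℕ} (p : Heis n) : p⁻¹.z = -p.z := rfl

noncomputable instance {n : ℕ} : Group (Heis n) where
  mul_assoc a b c := by
    ext i <;>
      simp only [Heis.mul_x, Heis.mul_y, Heis.mul_z, Pi.add_apply, heisS,
        Finset.sum_sub_distrib, Finset.sum_add_distrib, add_mul, mul_add] <;> ring
  one_mul a := by ext i <;> simp [heisS]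
  mul_one a := by ext i <;> simp [heisS]
  inv_mul_cancel a := by
    ext i <;> simp [heisS] <;> exact Finset.sum_eq_zero fun j _ => by ring

instance {n : ℕ} : TopologicalSpace (Heis n) :=
  TopologicalSpace.induced (fun p => (p.x, p.y, p.z)) inferInstance

/-- The horizontal projection `P₀ : H_n → ℝ^{2n}`, `log` followed by projection onto
`span{X_1,…,X_{2n}}`. -/
def heisP0 {n : ℕ} (p : Heis n) : (Fin n → ℝ) × (Fin n → ℝ) := (p.x, p.y)

/-- The generating set of `Γ_r`: `exp(r_i X_i)`, `exp(X_{n+i})`, `exp Z`. -/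
noncomputable def heisGen (n : ℕ) (r : Fin n → ℕ) : Set (Heis n) :=
  (Set.range fun i : Fin n =>
    (⟨fun j => if j = i then (r i : ℝ) else 0, 0, 0⟩ : Heis n)) ∪
  (Set.range fun i : Fin n =>
    (⟨0, fun j => if j = i then (1 : ℝ) else 0, 0⟩ : Heis n)) ∪
  {(⟨0, 0, 1⟩ : Heis n)}

namespace HeisAux

variable {n : ℕ}

/-- The explicit description of `Γ_r` as a set. -/
def latSet (n : ℕ) (r : Fin n → ℕ) : Set (Heis n) :=
  {p | ∃ a b : Fin n → ℤ, ∃ c : ℤ,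
    p.x = (fun i => (r i : ℝ) * (a i : ℝ)) ∧ p.y = (fun i => ((b i : ℝ))) ∧
    p.z = (c : ℝ) + (∑ i, (r i : ℝ) * (a i : ℝ) * (b i : ℝ)) / 2}

/-- `latSet` is a subgroup. -/
def latSubgroup (n : ℕ) (r : Fin n → ℕ) : Subgroup (Heis n) where
  carrier := latSet n r
  one_mem' := by
    refine ⟨0, 0, 0, ?_, ?_, ?_⟩
    · funext i; simp
    · funext i; simp
    · simp
  mul_mem' := by
    rintro p q ⟨a, b, c, hpx, hpy, hpz⟩ ⟨a', b', c', hqx, hqy, hqz⟩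
    refine ⟨fun i => a i + a' i, fun i => b i + b' i,
      c + c' - ∑ i, (r i : ℤ) * a' i * b i, ?_, ?_, ?_⟩
    · funext i; simp only [Heis.mul_x, hpx, hqx, Pi.add_apply]; push_cast; ring
    · funext i; simp only [Heis.mul_y, hpy, hqy, Pi.add_apply]; push_cast; ring
    · simp only [Heis.mul_z, hpx, hpy, hqx, hqy, hpz, hqz, heisS]
      push_cast
      have key : ∑ i, (r i : ℝ) * ((a i : ℝ) + (a' i : ℝ)) * ((b i : ℝ) + (b' i : ℝ))
          = ∑ i, ((r i : ℝ) * (a i : ℝ) * (b i : ℝ)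
            + (r i : ℝ) * (a' i : ℝ) * (b' i : ℝ)
            + ((r i : ℝ) * (a i : ℝ) * (b' i : ℝ) - (b i : ℝ) * ((r i : ℝ) * (a' i : ℝ)))
            + 2 * ((r i : ℝ) * (a' i : ℝ) * (b i : ℝ))) :=
        Finset.sum_congr rfl fun i _ => by ring
      rw [key, Finset.sum_add_distrib, Finset.sum_add_distrib, Finset.sum_add_distrib,
        ← Finset.mul_sum]
      ring
  inv_mem' := by
    rintro p ⟨a, b, c, hpx, hpy, hpz⟩
    refine ⟨fun i => -a i, fun i => -b i, -c - ∑ i, (r i : ℤ) * a i * b i, ?_, ?_, ?_⟩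
    · funext i; simp only [Heis.inv_x, hpx, Pi.neg_apply]; push_cast; ring
    · funext i; simp only [Heis.inv_y, hpy, Pi.neg_apply]; push_cast; ring
    · simp only [Heis.inv_z, hpz]
      push_cast
      have key : ∑ i, (r i : ℝ) * (-(a i : ℝ)) * (-(b i : ℝ))
          = ∑ i, (r i : ℝ) * (a i : ℝ) * (b i : ℝ) :=
        Finset.sum_congr rfl fun i _ => by ring
      rw [key]; ring

lemma X_mem (r : Fin n → ℕ) (a : Fin n → ℤ) :
    (⟨fun i => (r i : ℝ) * (a i : ℝ), 0, 0⟩ : Heis n) ∈ Subgroup.closure (heisGen n r) := by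
  let T : AddSubgroup (Fin n → ℝ) :=
    { carrier := {v | (⟨v, 0, 0⟩ : Heis n) ∈ Subgroup.closure (heisGen n r)}
      zero_mem' := one_mem (Subgroup.closure (heisGen n r))
      add_mem' := by
        intro u v hu hv
        simp only [Set.mem_setOf_eq] at hu hv ⊢
        have h := mul_mem hu hv
        have he : (⟨u, 0, 0⟩ : Heis n) * ⟨v, 0, 0⟩ = ⟨u + v, 0, 0⟩ := by
          ext i <;> simp [heisS]
        rwa [he] at h
      neg_mem' := by
        intro v hv
        simp only [Set.mem_setOf_eq] at hv ⊢
        have h := inv_mem hv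
        have he : (⟨v, 0, 0⟩ : Heis n)⁻¹ = ⟨-v, 0, 0⟩ := by ext i <;> simp
        rwa [he] at h }
  have hgen : ∀ i : Fin n, (fun j => if j = i then (r i : ℝ) else 0) ∈ T := fun i =>
    Subgroup.subset_closure (Or.inl (Or.inl ⟨i, rfl⟩))
  have hsum : (fun j => (r j : ℝ) * (a j : ℝ))
      = ∑ i, (a i) • (fun j => if j = i then (r i : ℝ) else 0) := by
    funext j
    rw [Finset.sum_apply]
    simp only [Pi.smul_apply, zsmul_eq_mul, mul_ite, mul_zero]
    rw [Finset.sum_ite_eq]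
    simp [mul_comm]
  have : (fun j => (r j : ℝ) * (a j : ℝ)) ∈ T := by
    rw [hsum]; exact sum_mem fun i _ => zsmul_mem (hgen i) (a i)
  exact this

lemma Y_mem (r : Fin n → ℕ) (b : Fin n → ℤ) :
    (⟨0, fun i => ((b i : ℝ)), 0⟩ : Heis n) ∈ Subgroup.closure (heisGen n r) := by
  let T : AddSubgroup (Fin n → ℝ) :=
    { carrier := {v | (⟨0, v, 0⟩ : Heis n) ∈ Subgroup.closure (heisGen n r)}
      zero_mem' := one_mem (Subgroup.closure (heisGen n r))
      add_mem' := by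
        intro u v hu hv
        simp only [Set.mem_setOf_eq] at hu hv ⊢
        have h := mul_mem hu hv
        have he : (⟨0, u, 0⟩ : Heis n) * ⟨0, v, 0⟩ = ⟨0, u + v, 0⟩ := by
          ext i <;> simp [heisS]
        rwa [he] at h
      neg_mem' := by
        intro v hv
        simp only [Set.mem_setOf_eq] at hv ⊢
        have h := inv_mem hv
        have he : (⟨0, v, 0⟩ : Heis n)⁻¹ = ⟨0, -v, 0⟩ := by ext i <;> simp
        rwa [he] at h }
  have hgen : ∀ i : Fin n, (fun j => if j = i then (1 : ℝ) else 0) ∈ T := fun i =>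
    Subgroup.subset_closure (Or.inl (Or.inr ⟨i, rfl⟩))
  have hsum : (fun j => ((b j : ℝ)))
      = ∑ i, (b i) • (fun j => if j = i then (1 : ℝ) else 0) := by
    funext j
    rw [Finset.sum_apply]
    simp only [Pi.smul_apply, zsmul_eq_mul, mul_ite, mul_zero]
    rw [Finset.sum_ite_eq]
    simp
  have : (fun j => ((b j : ℝ))) ∈ T := by
    rw [hsum]; exact sum_mem fun i _ => zsmul_mem (hgen i) (b i)
  exact this

lemma Z_mem (r : Fin n → ℕ) (c : ℤ) :
    (⟨0, 0, (c : ℝ)⟩ : Heis n) ∈ Subgroup.closure (heisGen n r) := by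
  let T : AddSubgroup ℝ :=
    { carrier := {t | (⟨0, 0, t⟩ : Heis n) ∈ Subgroup.closure (heisGen n r)}
      zero_mem' := one_mem (Subgroup.closure (heisGen n r))
      add_mem' := by
        intro u v hu hv
        simp only [Set.mem_setOf_eq] at hu hv ⊢
        have h := mul_mem hu hv
        have he : (⟨0, 0, u⟩ : Heis n) * ⟨0, 0, v⟩ = ⟨0, 0, u + v⟩ := by
          ext i <;> simp [heisS]
        rwa [he] at h
      neg_mem' := by
        intro v hv
        simp only [Set.mem_setOf_eq] at hv ⊢
        have h := inv_mem hv
        have he : (⟨0, 0, v⟩ : Heis n)⁻¹ = ⟨0, 0, -v⟩ := by ext i <;> simp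
        rwa [he] at h }
  have hone : (1 : ℝ) ∈ T := Subgroup.subset_closure (Or.inr rfl)
  have : ((c : ℝ)) ∈ T := by
    have := zsmul_mem hone c
    simpa using this
  exact this

lemma closure_eq (n : ℕ) (r : Fin n → ℕ) :
    (Subgroup.closure (heisGen n r) : Set (Heis n)) = latSet n r := by
  apply Set.Subset.antisymm
  · intro p hp
    refine (Subgroup.closure_le (latSubgroup n r)).mpr ?_ hp
    rintro q (⟨⟨i, rfl⟩ | ⟨i, rfl⟩⟩ | rfl)
    · exact ⟨fun j => if j = i then 1 else 0, 0, 0, by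
        funext j; by_cases h : j = i <;> simp [h], by ext j <;> simp, by simp⟩
    · exact ⟨0, fun j => if j = i then 1 else 0, 0, by
        funext j <;> simp, by funext j; by_cases h : j = i <;> simp [h], by simp⟩
    · exact ⟨0, 0, 1, by funext j <;> simp, by funext j <;> simp, by simp⟩
  · rintro p ⟨a, b, c, hx, hy, hz⟩
    have hprod : p = (⟨fun i => (r i : ℝ) * (a i : ℝ), 0, 0⟩ : Heis n)
        * ⟨0, fun i => ((b i : ℝ)), 0⟩ * ⟨0, 0, (c : ℝ)⟩ := by
      ext i
      · simp [hx]
      · simp [hy]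
      · simp only [Heis.mul_z, Heis.mul_x, Heis.mul_y, hz, heisS, add_zero, zero_add,
          Pi.add_apply, Pi.zero_apply, mul_zero, zero_mul, sub_zero, zero_sub, neg_zero,
          Finset.sum_const_zero]
        ring
    rw [hprod]
    exact mul_mem (mul_mem (X_mem r a) (Y_mem r b)) (Z_mem r c)

end HeisAux

namespace HeisAux

lemma int_eq_zero_of_abs_lt {m : ℤ} (h : |(m : ℝ)| < 1) : (m : ℝ) = 0 := by
  have h1 : |m| < 1 := by exact_mod_cast (by rwa [← Int.cast_abs] at h : ((|m| : ℤ) : ℝ) < 1)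
  have h2 := abs_lt.mp h1
  have : m = 0 := by omega
  exact_mod_cast this

lemma sep {n : ℕ} (r : Fin n → ℕ) {p q : Heis n}
    (hp : p ∈ latSet n r) (hq : q ∈ latSet n r)
    (h : dist ((p.x, p.y, p.z) : (Fin n → ℝ) × (Fin n → ℝ) × ℝ) (q.x, q.y, q.z) < 1 / 2) :
    p = q := by
  obtain ⟨a, b, c, hpx, hpy, hpz⟩ := hp
  obtain ⟨a', b', c', hqx, hqy, hqz⟩ := hq
  rw [Prod.dist_eq, Prod.dist_eq, max_lt_iff, max_lt_iff] at h
  have h1 : dist p.x q.x < 1 / 2 := h.1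
  have h2 : dist p.y q.y < 1 / 2 := h.2.1
  have h3 : dist p.z q.z < 1 / 2 := h.2.2
  have hx : p.x = q.x := by
    funext i
    have hi : dist (p.x i) (q.x i) < 1 / 2 := (dist_pi_lt_iff (by norm_num)).mp h1 i
    rw [Real.dist_eq] at hi
    have hcast : p.x i - q.x i = (((r i : ℤ) * a i - (r i : ℤ) * a' i : ℤ) : ℝ) := by
      rw [hpx, hqx]; push_cast; ring
    have h0 : (((r i : ℤ) * a i - (r i : ℤ) * a' i : ℤ) : ℝ) = 0 :=
      int_eq_zero_of_abs_lt (by rw [← hcast]; linarith [hi])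
    have : p.x i - q.x i = 0 := by rw [hcast, h0]
    linarith
  have hy : p.y = q.y := by
    funext i
    have hi : dist (p.y i) (q.y i) < 1 / 2 := (dist_pi_lt_iff (by norm_num)).mp h2 i
    rw [Real.dist_eq] at hi
    have hcast : p.y i - q.y i = ((b i - b' i : ℤ) : ℝ) := by
      rw [hpy, hqy]; push_cast; ring
    have h0 : ((b i - b' i : ℤ) : ℝ) = 0 :=
      int_eq_zero_of_abs_lt (by rw [← hcast]; linarith [hi])
    have : p.y i - q.y i = 0 := by rw [hcast, h0]
    linarith
  have hz : p.z = q.z := by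
    have ha : ∀ i, (r i : ℝ) * (a i : ℝ) = (r i : ℝ) * (a' i : ℝ) := fun i =>
      congrFun (hpx.symm.trans (hx.trans hqx)) i
    have hb : ∀ i, ((a : Fin n → ℤ) i : ℝ) = (a i : ℝ) := fun i => rfl
    have hb' : ∀ i, ((b i : ℝ)) = ((b' i : ℝ)) := fun i =>
      congrFun (hpy.symm.trans (hy.trans hqy)) i
    have hs : ∑ i, (r i : ℝ) * (a i : ℝ) * (b i : ℝ)
        = ∑ i, (r i : ℝ) * (a' i : ℝ) * (b' i : ℝ) :=
      Finset.sum_congr rfl fun i _ => by rw [ha i, hb' i]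
    rw [Real.dist_eq] at h3
    have hcast : p.z - q.z = ((c - c' : ℤ) : ℝ) := by
      rw [hpz, hqz, hs]; push_cast; ring
    have h0 : ((c - c' : ℤ) : ℝ) = 0 :=
      int_eq_zero_of_abs_lt (by rw [← hcast]; linarith [h3])
    have : p.z - q.z = 0 := by rw [hcast, h0]
    linarith
  exact Heis.ext hx hy hz

lemma compact_K (n : ℕ) (r : Fin n → ℕ) :
    IsCompact ((fun p : Heis n => (p.x, p.y, p.z)) ⁻¹'
      (Set.Icc (0 : Fin n → ℝ) (fun i => (r i : ℝ)) ×ˢ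
        (Set.Icc (0 : Fin n → ℝ) 1 ×ˢ Set.Icc (0 : ℝ) 1))) := by
  have hC : IsCompact (Set.Icc (0 : Fin n → ℝ) (fun i => (r i : ℝ)) ×ˢ
      (Set.Icc (0 : Fin n → ℝ) 1 ×ˢ Set.Icc (0 : ℝ) 1)) :=
    isCompact_Icc.prod (isCompact_Icc.prod isCompact_Icc)
  have hg : Continuous (fun v : (Fin n → ℝ) × (Fin n → ℝ) × ℝ =>
      (⟨v.1, v.2.1, v.2.2⟩ : Heis n)) := by
    apply continuous_induced_rng.mpr
    exact continuous_id
  have himg : (fun p : Heis n => (p.x, p.y, p.z)) ⁻¹'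
      (Set.Icc (0 : Fin n → ℝ) (fun i => (r i : ℝ)) ×ˢ
        (Set.Icc (0 : Fin n → ℝ) 1 ×ˢ Set.Icc (0 : ℝ) 1))
      = (fun v : (Fin n → ℝ) × (Fin n → ℝ) × ℝ => (⟨v.1, v.2.1, v.2.2⟩ : Heis n)) ''
        (Set.Icc (0 : Fin n → ℝ) (fun i => (r i : ℝ)) ×ˢ
          (Set.Icc (0 : Fin n → ℝ) 1 ×ˢ Set.Icc (0 : ℝ) 1)) := by
    ext p
    constructor
    · intro hp; exact ⟨(p.x, p.y, p.z), hp, rfl⟩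
    · rintro ⟨v, hv, rfl⟩; exact hv
  rw [himg]
  exact hC.image hg

lemma cocompact {n : ℕ} (r : Fin n → ℕ) (hr : ∀ i, 0 < r i) (g : Heis n) :
    ∃ γ ∈ latSet n r, γ * g ∈ (fun p : Heis n => (p.x, p.y, p.z)) ⁻¹'
      (Set.Icc (0 : Fin n → ℝ) (fun i => (r i : ℝ)) ×ˢ
        (Set.Icc (0 : Fin n → ℝ) 1 ×ˢ Set.Icc (0 : ℝ) 1)) := by
  have hrpos : ∀ i, (0 : ℝ) < r i := fun i => by exact_mod_cast hr i
  set a : Fin n → ℤ := fun i => -⌊g.x i / (r i : ℝ)⌋ with hadef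
  set b : Fin n → ℤ := fun i => -⌊g.y i⌋ with hbdef
  set s : ℝ := ∑ i, (r i : ℝ) * (a i : ℝ) * (b i : ℝ) with hsdef
  set xv : Fin n → ℝ := fun i => (r i : ℝ) * (a i : ℝ) with hxvdef
  set yv : Fin n → ℝ := fun i => ((b i : ℝ)) with hyvdef
  set w : ℝ := s / 2 + g.z + heisS xv yv g.x g.y / 2 with hwdef
  set c : ℤ := -⌊w⌋ with hcdef
  refine ⟨⟨xv, yv, (c : ℝ) + s / 2⟩, ⟨a, b, c, rfl, rfl, rfl⟩, ?_⟩
  simp only [Set.mem_preimage, Set.mem_prod, Set.mem_Icc, Heis.mul_x, Heis.mul_y,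
    Heis.mul_z, Pi.le_def, Pi.add_apply, Pi.zero_apply, Pi.one_apply]
  have hxb : ∀ i, 0 ≤ xv i + g.x i ∧ xv i + g.x i ≤ (r i : ℝ) := by
    intro i
    have hfl : ((⌊g.x i / (r i : ℝ)⌋ : ℤ) : ℝ) ≤ g.x i / (r i : ℝ) := Int.floor_le _
    have hfl2 : g.x i / (r i : ℝ) < ((⌊g.x i / (r i : ℝ)⌋ : ℤ) : ℝ) + 1 :=
      Int.lt_floor_add_one _
    have h2 : ((⌊g.x i / (r i : ℝ)⌋ : ℤ) : ℝ) * (r i : ℝ) ≤ g.x i :=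
      (le_div_iff₀ (hrpos i)).mp hfl
    have h3 : g.x i < (((⌊g.x i / (r i : ℝ)⌋ : ℤ) : ℝ) + 1) * (r i : ℝ) :=
      (div_lt_iff₀ (hrpos i)).mp hfl2
    have hxvi : xv i = (r i : ℝ) * (-((⌊g.x i / (r i : ℝ)⌋ : ℤ) : ℝ)) := by
      rw [hxvdef]
      simp [hadef]
    constructor <;> rw [hxvi] <;> nlinarith [h2, h3]
  have hyb : ∀ i, 0 ≤ yv i + g.y i ∧ yv i + g.y i ≤ 1 := by
    intro i
    have hfl : ((⌊g.y i⌋ : ℤ) : ℝ) ≤ g.y i := Int.floor_le _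
    have hfl2 : g.y i < ((⌊g.y i⌋ : ℤ) : ℝ) + 1 := Int.lt_floor_add_one _
    have hyvi : yv i = -((⌊g.y i⌋ : ℤ) : ℝ) := by
      rw [hyvdef]
      simp [hbdef]
    constructor <;> rw [hyvi] <;> linarith
  have hzb : 0 ≤ (c : ℝ) + s / 2 + g.z + heisS xv yv g.x g.y / 2 ∧
      (c : ℝ) + s / 2 + g.z + heisS xv yv g.x g.y / 2 ≤ 1 := by
    have hce : (c : ℝ) = -((⌊w⌋ : ℤ) : ℝ) := by rw [hcdef]; push_cast; ring
    have hkey : (c : ℝ) + s / 2 + g.z + heisS xv yv g.x g.y / 2 = w - ((⌊w⌋ : ℤ) : ℝ) := by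
      rw [hce, hwdef]; ring
    have hfl : ((⌊w⌋ : ℤ) : ℝ) ≤ w := Int.floor_le _
    have hfl2 : w < ((⌊w⌋ : ℤ) : ℝ) + 1 := Int.lt_floor_add_one _
    rw [hkey]
    constructor <;> linarith
  exact ⟨⟨fun i => (hxb i).1, fun i => (hxb i).2⟩,
    ⟨fun i => (hyb i).1, fun i => (hyb i).2⟩, hzb.1, hzb.2⟩

end HeisAux
/-- For `r` with `r_i ∣ r_{i+1}`, the subgroup `Γ_r` generated by
`exp(r_1X_1),…,exp(r_nX_n),exp(X_{n+1}),…,exp(X_{2n}),exp Z` is a lattice of `H_n`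
(discrete and cocompact), and its horizontal projection is the lattice of `ℝ^{2n}`
generated by `r_1e_1,…,r_ne_n,e_{n+1},…,e_{2n}`. -/
theorem stmt_18 (n : ℕ) (r : Fin n → ℕ) (hr : ∀ i, 0 < r i)
    (hdvd : ∀ i : Fin n, ∀ h : (i : ℕ) + 1 < n, r i ∣ r ⟨(i : ℕ) + 1, h⟩) :
    DiscreteTopology (Subgroup.closure (heisGen n r)) ∧
    (∃ K : Set (Heis n), IsCompact K ∧
      ∀ g : Heis n, ∃ γ ∈ Subgroup.closure (heisGen n r), γ * g ∈ K) ∧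
    heisP0 '' (Subgroup.closure (heisGen n r) : Set (Heis n)) =
      {v | ∃ a b : Fin n → ℤ,
        v = (fun i => (r i : ℝ) * (a i : ℝ), fun i => (b i : ℝ))} := by
  classical
  have hclos := HeisAux.closure_eq n r
  refine ⟨?_, ?_, ?_⟩
  · -- discreteness
    rw [discreteTopology_iff_isOpen_singleton]
    intro γ
    have hset : ({γ} : Set ↥(Subgroup.closure (heisGen n r))) =
        (fun p : ↥(Subgroup.closure (heisGen n r)) =>
          (((p : Heis n).x, (p : Heis n).y, (p : Heis n).z) :
            (Fin n → ℝ) × (Fin n → ℝ) × ℝ)) ⁻¹'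
          Metric.ball ((γ : Heis n).x, (γ : Heis n).y, (γ : Heis n).z) (1 / 2) := by
      ext δ
      simp only [Set.mem_singleton_iff, Set.mem_preimage, Metric.mem_ball]
      constructor
      · rintro rfl
        simp only [dist_self]
        norm_num
      · intro h
        have hδ : (δ : Heis n) ∈ HeisAux.latSet n r := by rw [← hclos]; exact δ.2
        have hγ : (γ : Heis n) ∈ HeisAux.latSet n r := by rw [← hclos]; exact γ.2
        exact Subtype.ext (HeisAux.sep r hδ hγ h)
    rw [hset]
    exact IsOpen.preimage (continuous_induced_dom.comp continuous_subtype_val)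
      Metric.isOpen_ball
  · -- cocompactness
    refine ⟨_, HeisAux.compact_K n r, ?_⟩
    intro g
    obtain ⟨γ, hγ, hγK⟩ := HeisAux.cocompact r hr g
    refine ⟨γ, ?_, hγK⟩
    rw [← SetLike.mem_coe, hclos]
    exact hγ
  · -- projection
    ext v
    simp only [Set.mem_image, Set.mem_setOf_eq]
    constructor
    · rintro ⟨p, hp, rfl⟩
      rw [hclos] at hp
      obtain ⟨a, b, c, hx, hy, hz⟩ := hp
      exact ⟨a, b, by simp only [heisP0, hx, hy]⟩
    · rintro ⟨a, b, rfl⟩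
      refine ⟨⟨fun i => (r i : ℝ) * (a i : ℝ), fun i => ((b i : ℝ)),
        ((0 : ℤ) : ℝ) + (∑ i, (r i : ℝ) * (a i : ℝ) * (b i : ℝ)) / 2⟩, ?_, rfl⟩
      rw [hclos]
      exact ⟨a, b, 0, rfl, rfl, rfl⟩
end
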